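/- Let f : X → ℝ be locally Lipschitz continuous and let A_k, A ⊂ X be nonempty with A compact and A_k → A in the Hausdorff metric. If a_k ∈ ∂f(A_k) and a_k converges to a in the weak* topology of X*, then a ∈ ∂f(A). -/

import Mathlib

open Filter Metric Set NormedSpace
open scoped NNReal
open scoped Topology

variable {X : Type*} [NormedAddCommGroup X] [NormedSpace ℝ X]

/-- Clarke's generalized directional derivative
`f⁰(x;h) = limsup_{y→x, t↓0⁺} (f(y+th) − f(y))/t`. -/
noncomputable def clarkeDeriv (f : X → ℝ) (x : X) (h : X) : ℝ :=
  Filter.limsup (fun p : X × ℝ => (f (p.1 + p.2 • h) - f p.1) / p.2)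
    ((nhds x) ×ˢ (nhdsWithin 0 (Set.Ioi 0)))

/-- Clarke's generalized gradient `∂f(x) = {a ∈ X* : ⟨a,h⟩ ≤ f⁰(x;h) ∀ h}`. -/
def clarkeGrad (f : X → ℝ) (x : X) : Set (StrongDual ℝ X) :=
  {a | ∀ h : X, a h ≤ clarkeDeriv f x h}

/-- Directional derivative of `f` on the set `A`: `f⁰(A;h) = sup_{y∈A} f⁰(y;h)`. -/
noncomputable def setDeriv (f : X → ℝ) (A : Set X) (h : X) : ℝ :=
  sSup ((fun y => clarkeDeriv f y h) '' A)

/-- Gradient of `f` on the set `A`: the weak*-closed convex hull of `⋃_{y∈A} ∂f(y)`. -/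
def setGrad (f : X → ℝ) (A : Set X) : Set (StrongDual ℝ X) :=
  {a | StrongDual.toWeakDual a ∈
    closure ((StrongDual.toWeakDual (𝕜 := ℝ) (E := X)) '' (convexHull ℝ (⋃ y ∈ A, clarkeGrad f y)))}

/-! ### Auxiliary lemmas -/

/-- The difference quotient appearing in Clarke's derivative. -/
noncomputable def cquot (f : X → ℝ) (h : X) (p : X × ℝ) : ℝ :=
  (f (p.1 + p.2 • h) - f p.1) / p.2

lemma clarkeDeriv_eq_limsup_cquot (f : X → ℝ) (x h : X) :
    clarkeDeriv f x h = Filter.limsup (cquot f h) (𝓝 x ×ˢ 𝓝[>] (0:ℝ)) := rfl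

omit [NormedAddCommGroup X] [NormedSpace ℝ X] in
lemma bdd_le_of_ev {L : Filter (X × ℝ)} {u : X × ℝ → ℝ} {c : ℝ}
    (hev : ∀ᶠ p in L, |u p| ≤ c) : IsBoundedUnder (· ≤ ·) L u :=
  ⟨c, hev.mono fun _ hp => (abs_le.1 hp).2⟩

omit [NormedAddCommGroup X] [NormedSpace ℝ X] in
lemma bdd_ge_of_ev {L : Filter (X × ℝ)} {u : X × ℝ → ℝ} {c : ℝ}
    (hev : ∀ᶠ p in L, |u p| ≤ c) : IsBoundedUnder (· ≥ ·) L u :=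
  ⟨-c, hev.mono fun _ hp => (abs_le.1 hp).1⟩

/-- Local Lipschitz continuity gives a bound on the difference quotients near `x`. -/
lemma eventually_cquot_bound {f : X → ℝ} (hf : LocallyLipschitz f) (x : X) :
    ∃ C : ℝ, 0 ≤ C ∧ ∀ h : X, ∀ᶠ p in 𝓝 x ×ˢ 𝓝[>] (0:ℝ), |cquot f h p| ≤ C * ‖h‖ := by
  obtain ⟨K, t, ht, hK⟩ := hf x
  obtain ⟨r, hr, hball⟩ := Metric.mem_nhds_iff.1 ht
  refine ⟨K, K.coe_nonneg, fun h => ?_⟩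
  have h2 : Ioo (0:ℝ) (r / (2 * (‖h‖ + 1))) ∈ 𝓝[>] (0:ℝ) :=
    Ioo_mem_nhdsGT_of_mem ⟨le_refl 0, by positivity⟩
  filter_upwards [Filter.prod_mem_prod (Metric.ball_mem_nhds x (by positivity : 0 < r/2)) h2]
    with p hp
  obtain ⟨hp1, hp2⟩ := hp
  have hs : 0 < p.2 := hp2.1
  have hsh : p.2 * ‖h‖ < r / 2 := by
    have h1 : p.2 * ‖h‖ ≤ p.2 * (‖h‖ + 1) := by nlinarith [hs]
    have h2' : p.2 * (‖h‖ + 1) < r / 2 := by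
      have := hp2.2
      rw [lt_div_iff₀ (by positivity)] at this
      nlinarith [this]
    linarith
  have hy : p.1 ∈ ball x r := by
    have := mem_ball.1 hp1; exact mem_ball.2 (by linarith)
  have hd : dist (p.1 + p.2 • h) p.1 = p.2 * ‖h‖ := by
    rw [dist_eq_norm]
    simp [norm_smul, abs_of_pos hs]
  have hyt : p.1 + p.2 • h ∈ ball x r := by
    have h3 : dist (p.1 + p.2 • h) x ≤ dist (p.1 + p.2 • h) p.1 + dist p.1 x :=
      dist_triangle _ _ _
    have h4 : dist p.1 x < r/2 := mem_ball.1 hp1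
    exact mem_ball.2 (by rw [hd] at h3; linarith)
  have hlip := hK.dist_le_mul _ (hball hyt) _ (hball hy)
  rw [hd] at hlip
  have : |cquot f h p| = dist (f (p.1 + p.2 • h)) (f p.1) / p.2 := by
    rw [cquot, abs_div, abs_of_pos hs, Real.dist_eq]
  rw [this, div_le_iff₀ hs]
  calc dist (f (p.1 + p.2 • h)) (f p.1) ≤ K * (p.2 * ‖h‖) := hlip
    _ = K * ‖h‖ * p.2 := by ring

lemma clarkeDeriv_le_of_ev {f : X → ℝ} {x h : X} {c : ℝ}
    (hev : ∀ᶠ p in 𝓝 x ×ˢ 𝓝[>] (0:ℝ), |cquot f h p| ≤ c) : clarkeDeriv f x h ≤ c :=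
  limsup_le_of_le (bdd_ge_of_ev hev).isCoboundedUnder_le (hev.mono fun _ hp => (abs_le.1 hp).2)

lemma clarkeDeriv_zero' {f : X → ℝ} (x : X) : clarkeDeriv f x 0 = 0 := by
  rw [clarkeDeriv]
  have : (fun p : X × ℝ => (f (p.1 + p.2 • (0:X)) - f p.1) / p.2) = fun _ => (0:ℝ) := by
    funext p; simp
  rw [this]
  exact limsup_const 0

/-- Subadditivity of the Clarke directional derivative. -/
lemma clarkeDeriv_add_le {f : X → ℝ} {x : X} {C : ℝ}
    (hC : ∀ h : X, ∀ᶠ p in 𝓝 x ×ˢ 𝓝[>] (0:ℝ), |cquot f h p| ≤ C * ‖h‖) (h k : X) :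
    clarkeDeriv f x (h + k) ≤ clarkeDeriv f x h + clarkeDeriv f x k := by
  set L := 𝓝 x ×ˢ 𝓝[>] (0:ℝ) with hL
  set m : X × ℝ → X × ℝ := fun p => (p.1 + p.2 • k, p.2) with hm
  have hmt : Tendsto m L L := by
    refine Tendsto.prodMk ?_ tendsto_snd
    have h1 : Tendsto (fun p : X × ℝ => p.2 • k) L (𝓝 ((0:ℝ) • k)) :=
      (tendsto_snd.mono_right nhdsWithin_le_nhds).smul_const k
    have h2 := Tendsto.add (tendsto_fst (f := 𝓝 x) (g := 𝓝[>] (0:ℝ))) h1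
    simpa using h2
  have heq : ∀ p : X × ℝ, cquot f (h + k) p = cquot f h (m p) + cquot f k p := by
    intro p
    simp only [cquot, hm, smul_add]
    have harg : p.1 + (p.2 • h + p.2 • k) = p.1 + p.2 • k + p.2 • h := by abel
    rw [harg, ← add_div, sub_add_sub_cancel]
  have evh := hC h
  have evk := hC k
  have evhm : ∀ᶠ p in L, |cquot f h (m p)| ≤ C * ‖h‖ := hmt.eventually evh
  have step0 : clarkeDeriv f x (h + k) =
      limsup (fun p => cquot f h (m p) + cquot f k p) L := by
    rw [clarkeDeriv_eq_limsup_cquot]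
    exact limsup_congr (Eventually.of_forall heq)
  have step1 : limsup (fun p => cquot f h (m p) + cquot f k p) L
      ≤ limsup (fun p => cquot f h (m p)) L + limsup (cquot f k) L :=
    limsup_add_le (bdd_ge_of_ev evhm) (bdd_le_of_ev evhm)
      (bdd_ge_of_ev evk).isCoboundedUnder_le (bdd_le_of_ev evk)
  have step2 : limsup (fun p => cquot f h (m p)) L ≤ clarkeDeriv f x h := by
    have e1 : limsup (fun p => cquot f h (m p)) L = limsup (cquot f h) (Filter.map m L) :=
      limsup_comp (cquot f h) m L
    rw [e1, clarkeDeriv_eq_limsup_cquot]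
    refine limsup_le_limsup_of_le hmt ?_ (bdd_le_of_ev evh)
    have : IsBoundedUnder (· ≥ ·) (Filter.map m L) (cquot f h) :=
      ⟨-(C * ‖h‖), by
        rw [eventually_map] at *
        exact evhm.mono fun p hp => (abs_le.1 hp).1⟩
    exact this.isCoboundedUnder_le
  calc clarkeDeriv f x (h + k)
      = limsup (fun p => cquot f h (m p) + cquot f k p) L := step0
    _ ≤ limsup (fun p => cquot f h (m p)) L + limsup (cquot f k) L := step1
    _ ≤ clarkeDeriv f x h + clarkeDeriv f x k := by
        have e2 : limsup (cquot f k) L = clarkeDeriv f x k := rfl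
        linarith [step2, e2.le]

lemma map_const_mul_nhdsWithin_Ioi {c : ℝ} (hc : 0 < c) :
    Filter.map (fun t => c * t) (𝓝[>] (0:ℝ)) = 𝓝[>] (0:ℝ) := by
  have key : ∀ {d : ℝ}, 0 < d → Tendsto (fun t => d * t) (𝓝[>] (0:ℝ)) (𝓝[>] (0:ℝ)) := by
    intro d hd
    rw [tendsto_nhdsWithin_iff]
    constructor
    · have h0 : Tendsto (fun t : ℝ => d * t) (𝓝 0) (𝓝 (d * 0)) :=
        (continuous_const.mul continuous_id).tendsto (0:ℝ)
      simpa using h0.mono_left nhdsWithin_le_nhds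
    · exact eventually_mem_nhdsWithin.mono fun t ht => mul_pos hd ht
  refine le_antisymm (key hc) ?_
  calc 𝓝[>] (0:ℝ) = Filter.map (fun t => c * t) (Filter.map (fun t => c⁻¹ * t) (𝓝[>] (0:ℝ))) := by
        rw [Filter.map_map]
        have : ((fun t => c * t) ∘ fun t => c⁻¹ * t) = id := by
          funext t; simp [Function.comp]; field_simp
        rw [this, Filter.map_id]
    _ ≤ Filter.map (fun t => c * t) (𝓝[>] (0:ℝ)) := Filter.map_mono (key (by positivity))

/-- Positive homogeneity of the Clarke directional derivative. -/
lemma clarkeDeriv_smul {f : X → ℝ} {x : X} {C : ℝ}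
    (hC : ∀ h : X, ∀ᶠ p in 𝓝 x ×ˢ 𝓝[>] (0:ℝ), |cquot f h p| ≤ C * ‖h‖)
    {c : ℝ} (hc : 0 < c) (h : X) :
    clarkeDeriv f x (c • h) = c * clarkeDeriv f x h := by
  set L := 𝓝 x ×ˢ 𝓝[>] (0:ℝ) with hL
  set m : X × ℝ → X × ℝ := fun p => (p.1, c * p.2) with hm
  have hmap : Filter.map m L = L := by
    have : m = Prod.map id (fun t => c * t) := rfl
    rw [hL, this, ← Filter.prod_map_map_eq', Filter.map_id, map_const_mul_nhdsWithin_Ioi hc]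
  have hev : ∀ᶠ p in L, cquot f (c • h) p = c * cquot f h (m p) := by
    have hpos : ∀ᶠ p : X × ℝ in L, p.2 ∈ Ioi (0:ℝ) := by
      rw [hL, eventually_prod_iff]
      exact ⟨fun _ => True, by simp, fun t => t ∈ Ioi (0:ℝ), self_mem_nhdsWithin,
        fun _ _ ht => ht⟩
    refine hpos.mono fun p hp => ?_
    have ht : (0:ℝ) < p.2 := hp
    simp only [cquot, hm, smul_smul]
    rw [show p.2 * c = c * p.2 from mul_comm _ _]
    field_simp
  have evh := hC h
  have evhm : ∀ᶠ p in L, |cquot f h (m p)| ≤ C * ‖h‖ := by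
    have hh : ∀ᶠ p in Filter.map m L, |cquot f h p| ≤ C * ‖h‖ := by rw [hmap]; exact evh
    rwa [eventually_map] at hh
  have e0 : clarkeDeriv f x (c • h) = limsup (fun p => c * cquot f h (m p)) L :=
    limsup_congr hev
  have e1 : limsup (fun p => c * cquot f h (m p)) L
      = c * limsup (fun p => cquot f h (m p)) L := by
    have hb : ∀ᶠ p in L, |c * cquot f h (m p)| ≤ c * (C * ‖h‖) := by
      refine evhm.mono fun p hp => ?_
      rw [abs_mul, abs_of_pos hc]
      exact mul_le_mul_of_nonneg_left hp hc.le
    have := (OrderIso.mulLeft₀ c hc).limsup_apply (f := L) (u := fun p => cquot f h (m p))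
      (bdd_le_of_ev evhm) (bdd_ge_of_ev evhm).isCoboundedUnder_le
      (bdd_le_of_ev hb) (bdd_ge_of_ev hb).isCoboundedUnder_le
    exact this.symm
  have e2 : limsup (fun p => cquot f h (m p)) L = clarkeDeriv f x h := by
    have e1' : limsup (fun p => cquot f h (m p)) L = limsup (cquot f h) (Filter.map m L) :=
      limsup_comp (cquot f h) m L
    rw [e1', hmap]
    rfl
  rw [e0, e1, e2]

/-- Hahn–Banach: existence of an element of the Clarke gradient attaining the
directional derivative in a given direction. -/
lemma exists_clarkeGrad_eq {f : X → ℝ} (hf : LocallyLipschitz f) (x h : X) :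
    ∃ a : StrongDual ℝ X, a ∈ clarkeGrad f x ∧ a h = clarkeDeriv f x h := by
  obtain ⟨C, hC0, hC⟩ := eventually_cquot_bound hf x
  set N : X → ℝ := clarkeDeriv f x with hN
  have N_hom : ∀ c : ℝ, 0 < c → ∀ z, N (c • z) = c * N z := fun c hc z =>
    clarkeDeriv_smul hC hc z
  have N_add : ∀ z w, N (z + w) ≤ N z + N w := fun z w => clarkeDeriv_add_le hC z w
  have hzero : N 0 = 0 := clarkeDeriv_zero' x
  have hub : ∀ z, N z ≤ C * ‖z‖ := fun z => clarkeDeriv_le_of_ev (hC z)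
  have hneg : ∀ z, -N z ≤ N (-z) := by
    intro z
    have h1 := N_add z (-z)
    rw [add_neg_cancel, hzero] at h1
    linarith
  have key : ∀ (f₀ : X →ₗ.[ℝ] ℝ), (∀ z : f₀.domain, f₀ z ≤ N z) →
      ∃ g : X →ₗ[ℝ] ℝ, (∀ z : f₀.domain, g z = f₀ z) ∧ ∀ z, g z ≤ N z :=
    fun f₀ hdom => exists_extension_of_le_sublinear f₀ N N_hom N_add hdom
  by_cases hh : h = 0
  · obtain ⟨g, hgeq, hgle⟩ := key ⟨⊥, 0⟩ (by
      rintro ⟨z, hz⟩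
      rcases Submodule.mem_bot ℝ |>.1 hz with rfl
      simp [hzero])
    refine ⟨g.mkContinuous C fun z => ?_, fun z => ?_, ?_⟩
    · rw [Real.norm_eq_abs, abs_le]
      constructor
      · have h1 := hgle (-z)
        have h2 := hub (-z)
        rw [map_neg, norm_neg] at *
        linarith
      · exact (hgle z).trans (hub z)
    · rw [LinearMap.mkContinuous_apply]; exact hgle z
    · subst hh
      rw [hzero]
      simp
  · set f₀ : X →ₗ.[ℝ] ℝ := LinearPMap.mkSpanSingleton h (N h) hh with hf₀
    have hdom : ∀ z : f₀.domain, f₀ z ≤ N z := by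
      rintro ⟨z, hz⟩
      obtain ⟨c, rfl⟩ := Submodule.mem_span_singleton.1 hz
      have happ : f₀ ⟨c • h, hz⟩ = c • N h := LinearPMap.mkSpanSingleton'_apply _ _ _ c hz
      rw [happ]
      rcases lt_trichotomy c 0 with hc | hc | hc
      · have h1 : N (c • h) = N ((-c) • (-h)) := by rw [neg_smul_neg]
        rw [h1, N_hom (-c) (by linarith) (-h)]
        have h2 : -N h ≤ N (-h) := hneg h
        have h3 : (-c) * (-N h) ≤ (-c) * N (-h) :=
          mul_le_mul_of_nonneg_left h2 (by linarith)
        simp only [smul_eq_mul]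
        nlinarith
      · subst hc; simp [hzero]
      · rw [N_hom c hc h]; simp [smul_eq_mul]
    obtain ⟨g, hgeq, hgle⟩ := key f₀ hdom
    refine ⟨g.mkContinuous C fun z => ?_, fun z => ?_, ?_⟩
    · rw [Real.norm_eq_abs, abs_le]
      constructor
      · have h1 := hgle (-z)
        have h2 := hub (-z)
        rw [map_neg, norm_neg] at *
        linarith
      · exact (hgle z).trans (hub z)
    · rw [LinearMap.mkContinuous_apply]; exact hgle z
    · rw [LinearMap.mkContinuous_apply]
      have hmem : h ∈ Submodule.span ℝ {h} := Submodule.mem_span_singleton_self h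
      have := hgeq ⟨h, hmem⟩
      rw [this]
      exact LinearPMap.mkSpanSingleton'_apply_self _ _ _ _

/-- Upper semicontinuity of the Clarke directional derivative in the base point. -/
lemma clarkeDeriv_usc {f : X → ℝ} (hf : LocallyLipschitz f) (x h : X)
    {ε : ℝ} (hε : 0 < ε) :
    ∃ δ > 0, ∀ y : X, dist y x < δ → clarkeDeriv f y h ≤ clarkeDeriv f x h + ε := by
  obtain ⟨C, hC0, hC⟩ := eventually_cquot_bound hf x
  have hbx := hC h
  have hlt : clarkeDeriv f x h < clarkeDeriv f x h + ε := lt_add_of_pos_right _ hε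
  have hev : ∀ᶠ p in 𝓝 x ×ˢ 𝓝[>] (0:ℝ), cquot f h p < clarkeDeriv f x h + ε :=
    eventually_lt_of_limsup_lt hlt (bdd_le_of_ev hbx)
  rw [Filter.eventually_iff, Filter.mem_prod_iff] at hev
  obtain ⟨s, hs, t, ht, hsub⟩ := hev
  obtain ⟨δ₁, hδ₁, hball₁⟩ := Metric.mem_nhds_iff.1 hs
  refine ⟨δ₁ / 2, by positivity, fun y hy => ?_⟩
  have hyev : ∀ᶠ p in 𝓝 y ×ˢ 𝓝[>] (0:ℝ), cquot f h p < clarkeDeriv f x h + ε := by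
    have hb : ball x δ₁ ∈ 𝓝 y :=
      isOpen_ball.mem_nhds (mem_ball.2 (by rw [dist_comm] at hy ⊢; linarith))
    have hmem : ball x δ₁ ×ˢ t ∈ 𝓝 y ×ˢ 𝓝[>] (0:ℝ) := Filter.prod_mem_prod hb ht
    filter_upwards [hmem] with p hp
    exact hsub ⟨hball₁ hp.1, hp.2⟩
  obtain ⟨Cy, hCy0, hCy⟩ := eventually_cquot_bound hf y
  exact limsup_le_of_le (bdd_ge_of_ev (hCy h)).isCoboundedUnder_le
    (hyev.mono fun _ hp => hp.le)

/-- An evaluation bound for members of `setGrad`. -/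
lemma setGrad_eval_le {f : X → ℝ} {B : Set X} {u : ℝ} {h : X}
    (hb : ∀ y ∈ B, clarkeDeriv f y h ≤ u) {a : StrongDual ℝ X}
    (haB : a ∈ setGrad f B) : a h ≤ u := by
  have hconv : Convex ℝ {b : StrongDual ℝ X | b h ≤ u} := by
    intro b₁ h₁ b₂ h₂ s t hs ht hst
    simp only [mem_setOf_eq] at h₁ h₂ ⊢
    have hev : (s • b₁ + t • b₂) h = s * b₁ h + t * b₂ h := by
      simp [ContinuousLinearMap.add_apply, ContinuousLinearMap.smul_apply]
    rw [hev]
    have e1 : s * u + t * u = u := by rw [← add_mul, hst, one_mul]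
    have e2 := mul_le_mul_of_nonneg_left h₁ hs
    have e3 := mul_le_mul_of_nonneg_left h₂ ht
    linarith
  have h₁ : convexHull ℝ (⋃ y ∈ B, clarkeGrad f y) ⊆ {b : StrongDual ℝ X | b h ≤ u} := by
    apply convexHull_min ?_ hconv
    rintro b hb'
    simp only [mem_iUnion] at hb'
    obtain ⟨y, hy, hby⟩ := hb'
    exact (hby h).trans (hb y hy)
  have h₂ : IsClosed {w : WeakDual ℝ X | w h ≤ u} :=
    IsClosed.preimage (WeakDual.eval_continuous h) isClosed_Iic
  have h₃ : closure ((StrongDual.toWeakDual (𝕜 := ℝ) (E := X)) ''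
      (convexHull ℝ (⋃ y ∈ B, clarkeGrad f y))) ⊆ {w : WeakDual ℝ X | w h ≤ u} := by
    apply closure_minimal ?_ h₂
    rintro _ ⟨b, hbmem, rfl⟩
    exact h₁ hbmem
  exact h₃ haB

/-- Every continuous linear functional on the weak-* dual is an evaluation. -/
lemma weakDual_dual_rep (g : WeakDual ℝ X →L[ℝ] ℝ) :
    ∃ h : X, ∀ w : WeakDual ℝ X, g w = w h := by
  set B := topDualPairing ℝ X with hB
  have hb := LinearMap.hasBasis_weakBilin B
  have hev : {w : WeakDual ℝ X | |g w| < 1} ∈ 𝓝 (0 : WeakDual ℝ X) := by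
    have ht := g.continuous.tendsto (0 : WeakDual ℝ X)
    rw [map_zero] at ht
    have hball : Metric.ball (0:ℝ) 1 ∈ 𝓝 (0:ℝ) := Metric.ball_mem_nhds _ one_pos
    have := ht hball
    refine Filter.mem_of_superset this ?_
    intro w hw
    simpa [Real.dist_eq] using hw
  obtain ⟨U, hU, hUsub⟩ := hb.mem_iff.1 hev
  obtain ⟨sf, r, hr, hUeq⟩ := (SeminormFamily.basisSets_iff _).1 hU
  subst hUeq
  have key : ∀ w : WeakDual ℝ X, (∀ y ∈ sf, w y = 0) → g w = 0 := by
    intro w hw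
    by_contra hgw
    have hmem : ∀ c : ℝ, (c • w) ∈ (sf.sup (B.toSeminormFamily)).ball 0 r := by
      intro c
      refine (Seminorm.mem_ball_zero _).2 ?_
      refine Seminorm.finset_sup_apply_lt hr ?_
      intro y hy
      show ‖B (c • w) y‖ < r
      have hsm : B (c • w) = c • B w := map_smul B c w
      rw [hsm]
      simp only [LinearMap.smul_apply]
      have hwy : B w y = 0 := hw y hy
      rw [hwy]
      simpa using hr
    have h1 := hUsub (hmem ((g w)⁻¹))
    have h1' : |g ((g w)⁻¹ • w)| < 1 := h1
    have h2 : g ((g w)⁻¹ • w) = (g w)⁻¹ * g w := by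
      rw [g.map_smul]; rfl
    rw [h2, inv_mul_cancel₀ hgw] at h1'
    norm_num at h1'
  let gl : StrongDual ℝ X →ₗ[ℝ] ℝ :=
    { toFun := fun a => g (StrongDual.toWeakDual a)
      map_add' := by intros; simp
      map_smul' := by intros; simp }
  let L : {y // y ∈ sf} → StrongDual ℝ X →ₗ[ℝ] ℝ := fun y =>
    { toFun := fun a => a y.1
      map_add' := by intros; rfl
      map_smul' := by intros; rfl }
  have hker : ⨅ y : {y // y ∈ sf}, LinearMap.ker (L y) ≤ LinearMap.ker gl := by
    intro w hw
    rw [Submodule.mem_iInf] at hw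
    have hw' : ∀ y ∈ sf, w y = 0 := fun y hy => hw ⟨y, hy⟩
    exact key (StrongDual.toWeakDual w) hw'
  have hspan := mem_span_of_iInf_ker_le_ker hker
  rw [Submodule.mem_span_range_iff_exists_fun] at hspan
  obtain ⟨c, hc⟩ := hspan
  refine ⟨∑ i : {y // y ∈ sf}, c i • (i.1 : X), fun w => ?_⟩
  have e1 : g w = gl (WeakDual.toStrongDual w) := rfl
  have e2 : gl (WeakDual.toStrongDual w) = ∑ i : {y // y ∈ sf}, c i * w i.1 := by
    rw [← hc]
    simp [L, LinearMap.sum_apply, LinearMap.smul_apply, smul_eq_mul]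
  have e3 : w (∑ i : {y // y ∈ sf}, c i • (i.1 : X)) = ∑ i : {y // y ∈ sf}, c i * w i.1 := by
    rw [map_sum]
    simp
  rw [e1, e2, e3]

/-- Proposition 2.2 (upper semicontinuity), inclusion (6):
weak* limits of `a_k ∈ ∂f(A_k)` belong to `∂f(A)`. -/
theorem weakStar_limit_mem_setGrad
    [CompleteSpace X] (f : X → ℝ) (hf : LocallyLipschitz f)
    (A : ℕ → Set X) (A₀ : Set X) (hne : ∀ k, (A k).Nonempty) (hA₀ : A₀.Nonempty)
    (hcomp : IsCompact A₀)
    (hconv : ∀ ε : ℝ, 0 < ε → ∀ᶠ k in atTop,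
      A₀ ⊆ Metric.thickening ε (A k) ∧ A k ⊆ Metric.thickening ε A₀)
    (a : ℕ → StrongDual ℝ X) (ha : ∀ k, a k ∈ setGrad f (A k)) (a₀ : StrongDual ℝ X)
    (hlim : Tendsto (fun k => StrongDual.toWeakDual (a k)) atTop (nhds (StrongDual.toWeakDual a₀))) :
    a₀ ∈ setGrad f A₀ := by
  by_contra hnot
  -- the target set is closed and convex in the weak-* topology
  set S : Set (WeakDual ℝ X) :=
    closure ((StrongDual.toWeakDual (𝕜 := ℝ) (E := X)) '' (convexHull ℝ (⋃ y ∈ A₀, clarkeGrad f y)))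
    with hS
  have hnotmem : StrongDual.toWeakDual a₀ ∉ S := hnot
  have hSconv : Convex ℝ S := by
    refine Convex.closure ?_
    have h1 : Convex ℝ (convexHull ℝ (⋃ y ∈ A₀, clarkeGrad f y)) := convex_convexHull _ _
    have h2 := h1.linear_image
      ((StrongDual.toWeakDual (𝕜 := ℝ) (E := X)) : StrongDual ℝ X ≃ₗ[ℝ] WeakDual ℝ X).toLinearMap
    simpa using h2
  haveI : LocallyConvexSpace ℝ (WeakDual ℝ X) :=
    WeakBilin.locallyConvexSpace (B := topDualPairing ℝ X)
  obtain ⟨g, u, hgu, hua⟩ :=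
    geometric_hahn_banach_closed_point hSconv isClosed_closure hnotmem
  obtain ⟨h, hrep⟩ := weakDual_dual_rep g
  -- every point of A₀ has Clarke derivative < u in direction h
  have hlt : ∀ y ∈ A₀, clarkeDeriv f y h < u := by
    intro y hy
    obtain ⟨b, hbmem, hbeq⟩ := exists_clarkeGrad_eq hf y h
    have hsub : b ∈ ⋃ y ∈ A₀, clarkeGrad f y := mem_iUnion₂.2 ⟨y, hy, hbmem⟩
    have hbS : StrongDual.toWeakDual b ∈ S :=
      subset_closure ⟨b, subset_convexHull _ _ hsub, rfl⟩
    have := hgu _ hbS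
    rw [hrep] at this
    rw [← hbeq]
    exact this
  -- a uniform neighborhood of A₀ on which the derivative is ≤ u
  have hcover : ∃ ρ > 0, ∀ z ∈ Metric.thickening ρ A₀, clarkeDeriv f z h ≤ u := by
    have husc : ∀ y : X, y ∈ A₀ → ∃ δ > 0, ∀ z : X, dist z y < δ →
        clarkeDeriv f z h ≤ u := by
      intro y hy
      have hεpos : 0 < (u - clarkeDeriv f y h) / 2 := by
        have := hlt y hy; linarith
      obtain ⟨δ, hδpos, hδ⟩ := clarkeDeriv_usc hf y h hεpos
      refine ⟨δ, hδpos, fun z hz => ?_⟩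
      have := hδ z hz
      have h2 := hlt y hy
      linarith
    choose! δ hδpos hδ using husc
    have hUopen : ∀ i : A₀, IsOpen (ball (i : X) (δ i / 2)) := fun _ => isOpen_ball
    have hcov : A₀ ⊆ ⋃ i : A₀, ball (i : X) (δ i / 2) := by
      intro z hz
      refine mem_iUnion.2 ⟨⟨z, hz⟩, ?_⟩
      have : (0:ℝ) < δ z / 2 := half_pos (hδpos z hz)
      simpa [mem_ball] using this
    obtain ⟨t, htsub⟩ := hcomp.elim_finite_subcover _ hUopen hcov
    have htne : t.Nonempty := by
      obtain ⟨y₀, hy₀⟩ := hA₀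
      obtain ⟨i, hi⟩ := mem_iUnion.1 (htsub hy₀)
      obtain ⟨hit, _⟩ := mem_iUnion.1 hi
      exact ⟨i, hit⟩
    set ρ := t.inf' htne (fun i => δ (i : X) / 2) with hρdef
    have hρpos : 0 < ρ := by
      rw [hρdef, Finset.lt_inf'_iff]
      intro i hi
      exact half_pos (hδpos i i.2)
    refine ⟨ρ, hρpos, fun z hz => ?_⟩
    obtain ⟨y, hyA, hdzy⟩ := Metric.mem_thickening_iff.1 hz
    obtain ⟨i, hi⟩ := mem_iUnion.1 (htsub hyA)
    obtain ⟨hit, hyball⟩ := mem_iUnion.1 hi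
    have hdyi : dist y (i : X) < δ (i : X) / 2 := mem_ball.1 hyball
    have hρle : ρ ≤ δ (i : X) / 2 := Finset.inf'_le _ hit
    have hdzi : dist z (i : X) < δ (i : X) := by
      have := dist_triangle z y (i : X)
      linarith
    exact hδ (i : X) i.2 z hdzi
  obtain ⟨ρ, hρpos, hρ⟩ := hcover
  -- eventually a k h ≤ u
  have hev1 : ∀ᶠ k in atTop, (a k) h ≤ u := by
    filter_upwards [hconv ρ hρpos] with k hk
    exact setGrad_eval_le (fun z hz => hρ z (hk.2 hz)) (ha k)
  -- but a k h → a₀ h > u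
  have htend : Tendsto (fun k => (a k) h) atTop (𝓝 (a₀ h)) := by
    have := (tendsto_iff_forall_eval_tendsto_topDualPairing).1 hlim h
    exact this
  have hu_lt : u < a₀ h := by
    have := hua
    rw [hrep] at this
    exact this
  have hev2 : ∀ᶠ k in atTop, u < (a k) h :=
    htend.eventually (eventually_gt_nhds hu_lt)
  obtain ⟨k, hk1, hk2⟩ := (hev1.and hev2).exists
  exact absurd hk1 (not_le.2 hk2)
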